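/- Let τ be an injective map on dyadic intervals satisfying condition S: there is M ≥ 1 such that for every dyadic interval J, the collection {τ(I) : τ(I) ⊆ J} splits into τ(L) ∪ E where E satisfies the M-Carleson condition and |τ(I)|/|I| ≤ M |τ(L)*|/|L*| for all I ∈ L. Then the operator T defined by T h_I = h_{τ(I)} is bounded on dyadic BMO with ‖Tx‖² ≤ 4M ‖x‖² (in particular ‖T‖ ≤ 2M^{1/2}). -/

import Mathlib

open MeasureTheory

/-- A dyadic interval `[k/2^n, (k+1)/2^n)` of `[0,1)`. -/
structure DI where
  n : ℕ
  k : ℕ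
  hk : k < 2 ^ n

namespace DI

/-- The underlying set of a dyadic interval. -/
def carrier (I : DI) : Set ℝ := Set.Ico ((I.k : ℝ) / 2 ^ I.n) ((I.k + 1 : ℝ) / 2 ^ I.n)

/-- The length `|I| = 2^{-n}` of a dyadic interval. -/
noncomputable def len (I : DI) : ENNReal := ENNReal.ofReal ((2 : ℝ)⁻¹ ^ I.n)

end DI

namespace DI

theorem ext' {I K : DI} (hn : I.n = K.n) (hk : I.k = K.k) : I = K := by
  cases I; cases K; simp_all

instance : Countable DI := by
  have : Function.Injective (fun I : DI => (I.n, I.k)) := by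
    intro a b h
    exact ext' (congrArg Prod.fst h) (congrArg Prod.snd h)
  exact Function.Injective.countable this

lemma left_mem (I : DI) : (I.k : ℝ) / 2 ^ I.n ∈ I.carrier := by
  constructor
  · exact le_rfl
  · rw [div_lt_div_iff_of_pos_right (by positivity)]
    linarith

lemma volume_carrier (I : DI) : volume I.carrier = I.len := by
  rw [carrier, Real.volume_Ico, len]
  congr 1
  rw [div_sub_div_same]
  ring_nf
  norm_num

lemma len_ne_zero (I : DI) : I.len ≠ 0 := by
  simp only [len, ne_eq, ENNReal.ofReal_eq_zero, not_le]
  positivity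

lemma len_ne_top (I : DI) : I.len ≠ ⊤ := ENNReal.ofReal_ne_top

lemma subset_iff {I K : DI} :
    I.carrier ⊆ K.carrier ↔
      K.n ≤ I.n ∧ K.k * 2 ^ (I.n - K.n) ≤ I.k ∧ I.k + 1 ≤ (K.k + 1) * 2 ^ (I.n - K.n) := by
  constructor
  · intro h
    have hn : K.n ≤ I.n := by
      have hv := measure_mono (μ := volume) h
      rw [volume_carrier, volume_carrier, len, len] at hv
      rw [ENNReal.ofReal_le_ofReal_iff (by positivity)] at hv
      by_contra hc
      push_neg at hc
      have := pow_lt_pow_right_of_lt_one₀ (by norm_num : (0:ℝ) < 2⁻¹) (by norm_num) hc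
      linarith
    have hmem := h (left_mem I)
    obtain ⟨h1, h2⟩ := hmem
    set d := I.n - K.n with hd
    have hpow : (2:ℝ) ^ I.n = 2 ^ K.n * 2 ^ d := by
      rw [← pow_add]; congr 1; omega
    refine ⟨hn, ?_, ?_⟩
    · rw [div_le_div_iff₀ (by positivity) (by positivity)] at h1
      rw [hpow] at h1
      have h1' : (K.k : ℝ) * 2 ^ d ≤ I.k := by
        have hp : (0:ℝ) < 2 ^ K.n := by positivity
        nlinarith
      exact_mod_cast h1'
    · rw [div_lt_div_iff₀ (by positivity) (by positivity)] at h2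
      rw [hpow] at h2
      have h2' : (I.k : ℝ) < (K.k + 1) * 2 ^ d := by
        have hp : (0:ℝ) < 2 ^ K.n := by positivity
        nlinarith
      have : I.k < (K.k + 1) * 2 ^ d := by exact_mod_cast h2'
      omega
  · rintro ⟨hn, h1, h2⟩ z hz
    obtain ⟨hz1, hz2⟩ := hz
    set d := I.n - K.n with hd
    have hpow : (2:ℝ) ^ I.n = 2 ^ K.n * 2 ^ d := by
      rw [← pow_add]; congr 1; omega
    have h1' : (K.k : ℝ) * 2 ^ d ≤ I.k := by exact_mod_cast h1
    have h2' : (I.k : ℝ) + 1 ≤ (K.k + 1) * 2 ^ d := by exact_mod_cast h2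
    constructor
    · calc (K.k : ℝ) / 2 ^ K.n = K.k * 2 ^ d / 2 ^ I.n := by
            rw [hpow]; field_simp
        _ ≤ I.k / 2 ^ I.n := by
            apply div_le_div_of_nonneg_right h1' <;> positivity
        _ ≤ z := hz1
    · calc z < (I.k + 1) / 2 ^ I.n := hz2
        _ ≤ (K.k + 1) * 2 ^ d / 2 ^ I.n := by
            apply div_le_div_of_nonneg_right h2' <;> positivity
        _ = (K.k + 1) / 2 ^ K.n := by rw [hpow]; field_simp

lemma eq_of_subset_of_n_le {I K : DI} (h : I.carrier ⊆ K.carrier) (hn : I.n ≤ K.n) : I = K := by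
  rw [subset_iff] at h
  obtain ⟨hn', h1, h2⟩ := h
  have he : I.n = K.n := le_antisymm hn hn'
  apply ext' he
  rw [he] at h1 h2
  simp at h1 h2
  omega

lemma trichotomy (I K : DI) :
    I.carrier ⊆ K.carrier ∨ K.carrier ⊆ I.carrier ∨ Disjoint I.carrier K.carrier := by
  wlog hn : K.n ≤ I.n with H
  · rcases H K I (le_of_not_ge hn) with h | h | h
    exacts [Or.inr (Or.inl h), Or.inl h, Or.inr (Or.inr h.symm)]
  by_cases hdis : Disjoint I.carrier K.carrier
  · exact Or.inr (Or.inr hdis)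
  left
  rw [Set.not_disjoint_iff] at hdis
  obtain ⟨z, ⟨hzI1, hzI2⟩, ⟨hzK1, hzK2⟩⟩ := hdis
  rw [subset_iff]
  set d := I.n - K.n with hd
  have hpow : (2:ℝ) ^ I.n = 2 ^ K.n * 2 ^ d := by
    rw [← pow_add]; congr 1; omega
  refine ⟨hn, ?_, ?_⟩
  · -- K.k/2^K.n ≤ z < (I.k+1)/2^I.n  →  K.k * 2^d < I.k + 1
    have hr : (K.k : ℝ) * 2 ^ d / 2 ^ I.n < (I.k + 1) / 2 ^ I.n := by
      calc (K.k : ℝ) * 2 ^ d / 2 ^ I.n = K.k / 2 ^ K.n := by rw [hpow]; field_simp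
        _ ≤ z := hzK1
        _ < _ := hzI2
    rw [div_lt_div_iff_of_pos_right (by positivity)] at hr
    have : (K.k : ℝ) * 2 ^ d < I.k + 1 := hr
    have h' : K.k * 2 ^ d < I.k + 1 := by exact_mod_cast this
    omega
  · -- I.k/2^I.n ≤ z < (K.k+1)/2^K.n → I.k < (K.k+1)*2^d
    have hr : (I.k : ℝ) / 2 ^ I.n < (K.k + 1) * 2 ^ d / 2 ^ I.n := by
      calc (I.k : ℝ) / 2 ^ I.n ≤ z := hzI1
        _ < (K.k + 1) / 2 ^ K.n := hzK2
        _ = (K.k + 1) * 2 ^ d / 2 ^ I.n := by rw [hpow]; field_simp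
    rw [div_lt_div_iff_of_pos_right (by positivity)] at hr
    have h' : I.k < (K.k + 1) * 2 ^ d := by exact_mod_cast hr
    omega

lemma carrier_subset_Ico01 (I : DI) : I.carrier ⊆ Set.Ico (0:ℝ) 1 := by
  rintro z ⟨h1, h2⟩
  constructor
  · have : (0:ℝ) ≤ I.k / 2 ^ I.n := by positivity
    linarith
  · have hle : ((I.k : ℝ) + 1) / 2 ^ I.n ≤ 1 := by
      rw [div_le_one (by positivity)]
      have := I.hk
      have : (I.k : ℝ) + 1 ≤ 2 ^ I.n := by exact_mod_cast this
      linarith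
    linarith


end DI

/-- The Carleson sum `∑_{I ∈ L, I ⊆ J} |I|`. -/
noncomputable def carlesonSum (L : Set DI) (J : DI) : ENNReal :=
  ∑' I : {I : DI // I ∈ L ∧ I.carrier ⊆ J.carrier}, I.1.len

/-- `L` satisfies the `M`-Carleson condition. -/
def CarlesonLE (L : Set DI) (M : ENNReal) : Prop :=
  ∀ J : DI, carlesonSum L J ≤ M * J.len

/-- The Carleson constant `⟦L⟧ = sup_J (1/|J|) ∑_{I ∈ L, I ⊆ J} |I|`. -/
noncomputable def carlesonConst (L : Set DI) : ENNReal :=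
  ⨆ J : DI, carlesonSum L J / J.len

/-- The square of the dyadic BMO norm of `x = ∑ x_I h_I`,
`‖x‖² = sup_J (1/|J|) ∑_{I ⊆ J} x_I² |I|`, in terms of the Haar coefficients. -/
noncomputable def bmoSq (x : DI → ℝ) : ENNReal :=
  ⨆ J : DI, (∑' I : {I : DI // I.carrier ⊆ J.carrier},
      ENNReal.ofReal ((x I.1) ^ 2) * I.1.len) / J.len

/-- `|L*|`: the Lebesgue measure of the set covered by the collection `L`. -/
noncomputable def covMeas (L : Set DI) : ENNReal := volume (⋃ I ∈ L, I.carrier)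

/-- `y` is the coefficient function of `Tx` where `T h_I = h_{τ(I)}` and `x` has
coefficients `x_I`. -/
def HaarCompat (τ : DI → DI) (x y : DI → ℝ) : Prop :=
  (∀ I, y (τ I) = x I) ∧ ∀ J, J ∉ Set.range τ → y J = 0

/-- The maximal elements of a collection of dyadic intervals, under inclusion. -/
def maxSet (S : Set DI) : Set DI :=
  {I | I ∈ S ∧ ∀ K ∈ S, I.carrier ⊆ K.carrier → I = K}

lemma sum_subset_le (x : DI → ℝ) (J : DI) :
    (∑' I : {I : DI // I.carrier ⊆ J.carrier}, ENNReal.ofReal (x I.1 ^ 2) * I.1.len)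
      ≤ bmoSq x * J.len := by
  have h : (∑' I : {I : DI // I.carrier ⊆ J.carrier},
      ENNReal.ofReal (x I.1 ^ 2) * I.1.len) / J.len ≤ bmoSq x :=
    le_iSup (fun J : DI => (∑' I : {I : DI // I.carrier ⊆ J.carrier},
      ENNReal.ofReal (x I.1 ^ 2) * I.1.len) / J.len) J
  calc (∑' I : {I : DI // I.carrier ⊆ J.carrier}, ENNReal.ofReal (x I.1 ^ 2) * I.1.len)
      = (∑' I : {I : DI // I.carrier ⊆ J.carrier},
          ENNReal.ofReal (x I.1 ^ 2) * I.1.len) / J.len * J.len :=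
        (ENNReal.div_mul_cancel J.len_ne_zero J.len_ne_top).symm
    _ ≤ bmoSq x * J.len := mul_le_mul_left h _

lemma sq_le_bmoSq (x : DI → ℝ) (I : DI) : ENNReal.ofReal (x I ^ 2) ≤ bmoSq x := by
  have h1 : ENNReal.ofReal (x I ^ 2) * I.len ≤ bmoSq x * I.len := by
    refine le_trans ?_ (sum_subset_le x I)
    exact ENNReal.le_tsum (⟨I, subset_rfl⟩ : {K : DI // K.carrier ⊆ I.carrier})
  exact (ENNReal.mul_le_mul_iff_left I.len_ne_zero I.len_ne_top).mp h1

lemma sum_mem_subset_le (x : DI → ℝ) (S : Set DI) (J : DI) :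
    (∑' I : {I : DI // I ∈ S ∧ I.carrier ⊆ J.carrier}, ENNReal.ofReal (x I.1 ^ 2) * I.1.len)
      ≤ bmoSq x * J.len := by
  refine le_trans ?_ (sum_subset_le x J)
  exact ENNReal.tsum_comp_le_tsum_of_injective
    (f := fun I : {I : DI // I ∈ S ∧ I.carrier ⊆ J.carrier} =>
      (⟨I.1, I.2.2⟩ : {I : DI // I.carrier ⊆ J.carrier}))
    (fun a b h => by
      have h2 := congrArg Subtype.val h
      exact Subtype.ext h2)
    (fun I => ENNReal.ofReal (x I.1 ^ 2) * I.1.len)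

lemma exists_max {L : Set DI} {I : DI} (hI : I ∈ L) :
    ∃ J ∈ maxSet L, I.carrier ⊆ J.carrier := by
  have hNne : (Set.Nonempty {n | ∃ K ∈ L, I.carrier ⊆ K.carrier ∧ K.n = n}) :=
    ⟨I.n, I, hI, subset_rfl, rfl⟩
  obtain ⟨K, hKL, hIK, hKn⟩ := Nat.sInf_mem hNne
  refine ⟨K, ⟨hKL, fun K' hK' hsub => ?_⟩, hIK⟩
  have h2 : sInf {n | ∃ K ∈ L, I.carrier ⊆ K.carrier ∧ K.n = n} ≤ K'.n :=
    Nat.sInf_le ⟨K', hK', hIK.trans hsub, rfl⟩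
  exact DI.eq_of_subset_of_n_le hsub (by omega)

lemma maxSet_pairwise (L : Set DI) : (maxSet L).PairwiseDisjoint DI.carrier := by
  intro I hI K hK hne
  rcases DI.trichotomy I K with h | h | h
  · exact absurd (hI.2 K hK.1 h) hne
  · exact absurd (hK.2 I hI.1 h).symm hne
  · exact h

lemma sum_maxSet_len_le (L : Set DI) : (∑' J : maxSet L, (J : DI).len) ≤ covMeas L := by
  have hme := measure_biUnion (μ := volume) (Set.to_countable (maxSet L)) (maxSet_pairwise L)
    (fun I _ => measurableSet_Ico)
  calc (∑' J : maxSet L, (J : DI).len) = ∑' J : maxSet L, volume (J : DI).carrier := by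
        simp [DI.volume_carrier]
    _ = volume (⋃ I ∈ maxSet L, I.carrier) := hme.symm
    _ ≤ covMeas L := measure_mono (Set.iUnion₂_mono' fun I hI => ⟨I, hI.1, subset_rfl⟩)

lemma sum_mem_le (x : DI → ℝ) (L : Set DI) :
    (∑' I : L, ENNReal.ofReal (x I.1 ^ 2) * I.1.len) ≤ bmoSq x * covMeas L := by
  classical
  have hch : ∀ I : L, ∃ J : maxSet L, (I : DI).carrier ⊆ (J : DI).carrier := by
    rintro ⟨I, hI⟩
    obtain ⟨J, hJ, hsub⟩ := exists_max hI
    exact ⟨⟨J, hJ⟩, hsub⟩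
  choose m hm using hch
  have hFinj : Function.Injective
      (fun I : L => (⟨m I, ⟨(I : DI), I.2, hm I⟩⟩ :
        Σ J : maxSet L, {I : DI // I ∈ L ∧ I.carrier ⊆ (J : DI).carrier})) := by
    intro a b h
    exact Subtype.ext (congrArg (fun p : (Σ J : maxSet L,
      {I : DI // I ∈ L ∧ I.carrier ⊆ (J : DI).carrier}) => p.2.1) h)
  calc (∑' I : L, ENNReal.ofReal (x I.1 ^ 2) * I.1.len)
      ≤ ∑' p : Σ J : maxSet L, {I : DI // I ∈ L ∧ I.carrier ⊆ (J : DI).carrier},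
          ENNReal.ofReal (x p.2.1 ^ 2) * p.2.1.len :=
        ENNReal.tsum_comp_le_tsum_of_injective hFinj _
    _ = ∑' (J : maxSet L), ∑' (I : {I : DI // I ∈ L ∧ I.carrier ⊆ (J : DI).carrier}),
          ENNReal.ofReal (x I.1 ^ 2) * I.1.len := ENNReal.tsum_sigma' _
    _ ≤ ∑' (J : maxSet L), bmoSq x * (J : DI).len :=
        ENNReal.tsum_le_tsum fun J => sum_mem_subset_le x L (J : DI)
    _ = bmoSq x * ∑' (J : maxSet L), (J : DI).len := ENNReal.tsum_mul_left
    _ ≤ bmoSq x * covMeas L := mul_le_mul_right (sum_maxSet_len_le L) _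

lemma covMeas_ne_top (L : Set DI) : covMeas L ≠ ⊤ := by
  have h : covMeas L ≤ volume (Set.Ico (0:ℝ) 1) :=
    measure_mono (Set.iUnion₂_subset fun I _ => DI.carrier_subset_Ico01 I)
  rw [Real.volume_Ico] at h
  exact ne_top_of_le_ne_top (by simp) h

lemma covMeas_ne_zero {L : Set DI} (h : L.Nonempty) : covMeas L ≠ 0 := by
  obtain ⟨I, hI⟩ := h
  have h1 : I.len ≤ covMeas L := by
    rw [← DI.volume_carrier]
    exact measure_mono (Set.subset_iUnion₂ (s := fun I _ => DI.carrier I) I hI)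
  exact fun h0 => I.len_ne_zero (le_antisymm (h0 ▸ h1) zero_le)

/-- If `τ` satisfies condition `S`, then `T h_I = h_{τ(I)}` is bounded on dyadic BMO
with `‖Tx‖² ≤ 4M ‖x‖²`. -/
theorem stmt8 (τ : DI → DI) (hτ : Function.Injective τ) (M : ENNReal) (hM : 1 ≤ M)
    (hS : ∀ J : DI, ∃ L E : Set DI,
      (τ '' L ∪ E = {K : DI | K ∈ Set.range τ ∧ K.carrier ⊆ J.carrier}) ∧
      Disjoint (τ '' L) E ∧
      CarlesonLE E M ∧
      ∀ I ∈ L, (τ I).len / I.len ≤ M * covMeas (τ '' L) / covMeas L)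
    (x y : DI → ℝ) (hxy : HaarCompat τ x y) :
    bmoSq y ≤ 4 * M * bmoSq x := by
  rw [bmoSq]
  apply iSup_le
  intro J
  obtain ⟨L, E, hset, hdis, hcar, hlen⟩ := hS J
  set f : DI → ENNReal := fun K => ENNReal.ofReal (y K ^ 2) * K.len with hf
  have hran : ∀ K : DI, K ∈ Set.range τ → f K ≤ bmoSq x * K.len := by
    rintro K ⟨I, rfl⟩
    show ENNReal.ofReal (y (τ I) ^ 2) * (τ I).len ≤ _
    rw [hxy.1 I]
    exact mul_le_mul_left (sq_le_bmoSq x I) _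
  have hEsub : E ⊆ {K : DI | K ∈ Set.range τ ∧ K.carrier ⊆ J.carrier} :=
    hset ▸ Set.subset_union_right
  have hLsub : τ '' L ⊆ {K : DI | K ∈ Set.range τ ∧ K.carrier ⊆ J.carrier} :=
    hset ▸ Set.subset_union_left
  have hptwise : ∀ K : DI, Set.indicator {K : DI | K.carrier ⊆ J.carrier} f K ≤
      Set.indicator (τ '' L) f K + Set.indicator E f K := by
    intro K
    by_cases hKL : K ∈ τ '' L
    · rw [Set.indicator_of_mem hKL]
      exact le_add_right (Set.indicator_le_self' (fun _ _ => zero_le) K)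
    by_cases hKE : K ∈ E
    · rw [Set.indicator_of_mem hKE]
      exact le_add_left (Set.indicator_le_self' (fun _ _ => zero_le) K)
    by_cases hKJ : K.carrier ⊆ J.carrier
    · rw [Set.indicator_of_mem (by exact hKJ)]
      have hKr : K ∉ Set.range τ := by
        intro hr
        have : K ∈ τ '' L ∪ E := hset ▸ (Set.mem_setOf.mpr ⟨hr, hKJ⟩)
        rcases this with h | h
        exacts [hKL h, hKE h]
      have : f K = 0 := by rw [hf]; simp [hxy.2 K hKr]
      rw [this]
      exact zero_le
    · rw [Set.indicator_of_notMem (by exact hKJ)]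
      exact zero_le
  have hsplit : (∑' K : {K : DI // K.carrier ⊆ J.carrier}, f K.1) ≤
      (∑' K : (τ '' L : Set DI), f K.1) + (∑' K : E, f K.1) := by
    rw [show (∑' K : {K : DI // K.carrier ⊆ J.carrier}, f K.1)
        = ∑' K : ({K : DI | K.carrier ⊆ J.carrier} : Set DI), f K.1 from rfl,
      tsum_subtype, tsum_subtype (τ '' L) f, tsum_subtype E f, ← ENNReal.tsum_add]
    exact ENNReal.tsum_le_tsum hptwise
  have hE : (∑' K : E, f K.1) ≤ bmoSq x * (M * J.len) := by
    calc (∑' K : E, f K.1) ≤ ∑' K : E, bmoSq x * (K : DI).len :=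
          ENNReal.tsum_le_tsum fun K => hran K.1 (hEsub K.2).1
      _ = bmoSq x * ∑' K : E, (K : DI).len := ENNReal.tsum_mul_left
      _ ≤ bmoSq x * carlesonSum E J := by
          refine mul_le_mul_right ?_ _
          exact ENNReal.tsum_comp_le_tsum_of_injective
            (f := fun K : E => (⟨K.1, K.2, (hEsub K.2).2⟩ :
              {I : DI // I ∈ E ∧ I.carrier ⊆ J.carrier}))
            (fun a b h => by
      have h2 := congrArg Subtype.val h
      exact Subtype.ext h2) (fun I => I.1.len)
      _ ≤ bmoSq x * (M * J.len) := mul_le_mul_right (hcar J) _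
  have hLbound : (∑' K : (τ '' L : Set DI), f K.1) ≤ bmoSq x * (M * J.len) := by
    rcases Set.eq_empty_or_nonempty L with rfl | hLne
    · simp
    · have hre : (∑' K : (τ '' L : Set DI), f K.1) = ∑' I : L, f (τ I.1) := by
        rw [← (Equiv.Set.image τ L hτ).tsum_eq (fun K : (τ '' L : Set DI) => f K.1)]
        rfl
      have hterm : ∀ I : L, f (τ I.1) ≤
          (M * covMeas (τ '' L) / covMeas L) * (ENNReal.ofReal (x I.1 ^ 2) * I.1.len) := by
        intro I
        have hd := hlen I.1 I.2
        rw [ENNReal.div_le_iff I.1.len_ne_zero I.1.len_ne_top] at hd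
        show ENNReal.ofReal (y (τ I.1) ^ 2) * (τ I.1).len ≤ _
        rw [hxy.1 I.1]
        calc ENNReal.ofReal (x I.1 ^ 2) * (τ I.1).len
            ≤ ENNReal.ofReal (x I.1 ^ 2) * ((M * covMeas (τ '' L) / covMeas L) * I.1.len) :=
              mul_le_mul_right hd _
          _ = (M * covMeas (τ '' L) / covMeas L) * (ENNReal.ofReal (x I.1 ^ 2) * I.1.len) := by
              ring
      calc (∑' K : (τ '' L : Set DI), f K.1) = ∑' I : L, f (τ I.1) := hre
        _ ≤ ∑' I : L, (M * covMeas (τ '' L) / covMeas L) *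
              (ENNReal.ofReal (x I.1 ^ 2) * I.1.len) := ENNReal.tsum_le_tsum hterm
        _ = (M * covMeas (τ '' L) / covMeas L) *
              ∑' I : L, ENNReal.ofReal (x I.1 ^ 2) * I.1.len := ENNReal.tsum_mul_left
        _ ≤ (M * covMeas (τ '' L) / covMeas L) * (bmoSq x * covMeas L) :=
              mul_le_mul_right (sum_mem_le x L) _
        _ = bmoSq x * ((M * covMeas (τ '' L) / covMeas L) * covMeas L) := by ring
        _ = bmoSq x * (M * covMeas (τ '' L)) := by
              rw [ENNReal.div_mul_cancel (covMeas_ne_zero hLne) (covMeas_ne_top L)]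
        _ ≤ bmoSq x * (M * J.len) := by
              refine mul_le_mul_right (mul_le_mul_right ?_ M) _
              rw [← J.volume_carrier]
              exact measure_mono (Set.iUnion₂_subset fun K hK => (hLsub hK).2)
  refine ENNReal.div_le_of_le_mul ?_
  calc (∑' I : {I : DI // I.carrier ⊆ J.carrier}, ENNReal.ofReal (y I.1 ^ 2) * I.1.len)
      = ∑' K : {K : DI // K.carrier ⊆ J.carrier}, f K.1 := rfl
    _ ≤ (∑' K : (τ '' L : Set DI), f K.1) + (∑' K : E, f K.1) := hsplit
    _ ≤ bmoSq x * (M * J.len) + bmoSq x * (M * J.len) := add_le_add hLbound hE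
    _ = 2 * M * bmoSq x * J.len := by ring
    _ ≤ 4 * M * bmoSq x * J.len := by
        gcongr
        norm_num
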